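/- Let p, q > 0 with pq > 4, and X = ((pq−1, −p),(q, −1)). Let λ = (pq−2+√(pq(pq−4)))/2 and μ = (pq−2−√(pq(pq−4)))/2. Then λμ = 1, λ > 1 > μ > 0, and for every positive integer k, X^k = (1/(λ−μ)) · ((μ'λ^k − λ'μ^k, −p(λ^k − μ^k)), (q(λ^k − μ^k), μ'μ^k − λ'λ^k)) where λ' = μ+1 and μ' = λ+1. In particular both entries of the first column of X^k are positive. -/
import Mathlib


open Real

/-- When `pq > 4`: with eigenvalues `λ = (pq−2+√(pq(pq−4)))/2` and `μ = (pq−2−√(pq(pq−4)))/2`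
of `X = ((pq−1,−p),(q,−1))`, one has `λμ = 1`, `λ > 1 > μ > 0`, the closed form for `X^k`
(with `λ' = μ+1`, `μ' = λ+1`), and both first-column entries of `X^k` are positive. -/
theorem dihedral_pq_gt_four (p q : ℝ) (hp : 0 < p) (hq : 0 < q) (hpq : 4 < p * q)
    (X : Matrix (Fin 2) (Fin 2) ℝ) (hX : X = !![p * q - 1, -p; q, -1])
    (l u : ℝ) (hl : l = (p * q - 2 + Real.sqrt (p * q * (p * q - 4))) / 2)
    (hu : u = (p * q - 2 - Real.sqrt (p * q * (p * q - 4))) / 2) :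
    l * u = 1 ∧ 1 < l ∧ u < 1 ∧ 0 < u ∧
    (∀ k : ℕ, 0 < k →
      X ^ k = (1 / (l - u)) •
        !![(l + 1) * l ^ k - (u + 1) * u ^ k, -p * (l ^ k - u ^ k);
           q * (l ^ k - u ^ k), (l + 1) * u ^ k - (u + 1) * l ^ k]) ∧
    (∀ k : ℕ, 0 < k → 0 < (X ^ k) 0 0 ∧ 0 < (X ^ k) 1 0) := by
  set s := Real.sqrt (p * q * (p * q - 4)) with hsdef
  have harg : 0 < p * q * (p * q - 4) := by nlinarith
  have hs2 : s ^ 2 = p * q * (p * q - 4) := Real.sq_sqrt harg.le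
  have hs0 : 0 < s := Real.sqrt_pos.mpr harg
  have hslt : s < p * q - 2 := by nlinarith
  have hprod : l * u = 1 := by rw [hl, hu]; field_simp; nlinarith
  have hsum : p * q = l + u + 2 := by rw [hl, hu]; ring
  have hl1 : 1 < l := by rw [hl]; nlinarith
  have hu0 : 0 < u := by rw [hu]; nlinarith
  have hu1 : u < 1 := by nlinarith
  have hul : u < l := by rw [hl, hu]; nlinarith
  have hne : l - u ≠ 0 := by intro h; nlinarith
  have hform : ∀ k : ℕ, X ^ (k + 1) = (1 / (l - u)) •
      !![(l + 1) * l ^ (k+1) - (u + 1) * u ^ (k+1), -p * (l ^ (k+1) - u ^ (k+1));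
         q * (l ^ (k+1) - u ^ (k+1)), (l + 1) * u ^ (k+1) - (u + 1) * l ^ (k+1)] := by
    intro k
    induction k with
    | zero =>
      rw [pow_one, hX]
      ext i j
      fin_cases i <;> fin_cases j <;> simp [Matrix.smul_apply] <;> field_simp
      · linear_combination (l - u) * hsum
      · ring
    | succ n ih =>
      rw [pow_succ, ih, hX, Matrix.smul_mul]
      congr 1
      ext i j
      fin_cases i <;> fin_cases j <;> simp [Matrix.mul_apply, Fin.sum_univ_two]
      · linear_combination (l ^ (n+2) - u ^ (n+2)) * hsum + (l ^ (n+1) - u ^ (n+1)) * hprod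
      · ring
      · linear_combination q * (l ^ (n+1) - u ^ (n+1)) * hsum
      · linear_combination (u ^ (n+1) - l ^ (n+1)) * hsum + (l ^ (n+1) - u ^ (n+1)) * hprod
  refine ⟨hprod, hl1, hu1, hu0, ?_, ?_⟩
  · intro k hk
    obtain ⟨m, rfl⟩ : ∃ m, k = m + 1 := ⟨k - 1, (Nat.succ_pred_eq_of_pos hk).symm⟩
    exact hform m
  · intro k hk
    obtain ⟨m, rfl⟩ : ∃ m, k = m + 1 := ⟨k - 1, (Nat.succ_pred_eq_of_pos hk).symm⟩
    rw [hform m]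
    have hpow : u ^ (m+1) < l ^ (m+1) := by
      apply pow_lt_pow_left₀ hul hu0.le
      omega
    have hupow : 0 < u ^ (m+1) := pow_pos hu0 _
    have hinv : 0 < 1 / (l - u) := div_pos one_pos (sub_pos.mpr hul)
    constructor
    · simp only [Matrix.smul_apply, Matrix.cons_val', Matrix.cons_val_zero,
        Matrix.empty_val', Matrix.cons_val_fin_one, smul_eq_mul]
      have : 0 < (l + 1) * l ^ (m+1) - (u + 1) * u ^ (m+1) := by nlinarith
      exact mul_pos hinv this
    · simp only [Matrix.smul_apply, Matrix.cons_val', Matrix.cons_val_zero,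
        Matrix.cons_val_one, Matrix.head_cons, Matrix.empty_val',
        Matrix.cons_val_fin_one, Matrix.head_fin_const, smul_eq_mul]
      have : 0 < q * (l ^ (m+1) - u ^ (m+1)) := by nlinarith
      exact mul_pos hinv this
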